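/- Let Δ be a finite set of size d and Σ a finite set of size s. Let K be a transitive permutation group on Δ having a regular set of size r_Δ with 2·r_Δ ≠ d, and let L be a transitive permutation group on Σ having a regular set of size r_Σ. Then the imprimitive wreath product K ≀ L has a regular set on Δ × Σ of size r_Σ·r_Δ + (s − r_Σ)·(d − r_Δ) (which, computed in the integers, equals r_Σ·d + (s − 2r_Σ)·(d − r_Δ)). -/

import Mathlib

open Pointwise MulAction

/-- The invariance group `G(R)` of an unordered relation `R` on `Ω`:
all permutations `g` such that `x ∈ R` implies `g • x ∈ R`. -/
def invGroup {Ω : Type*} [Fintype Ω] [DecidableEq Ω] (R : Set (Finset Ω)) :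
    Subgroup (Equiv.Perm Ω) where
  carrier := {g | ∀ x ∈ R, g • x ∈ R}
  one_mem' := fun x hx => by simpa using hx
  mul_mem' := fun ha hb x hx => by rw [mul_smul]; exact ha _ (hb _ hx)
  inv_mem' := by
    intro g hg x hx
    have himg : (fun y : Finset _ => g • y) '' R ⊆ R := by
      rintro - ⟨y, hy, rfl⟩; exact hg y hy
    have heq : (fun y : Finset _ => g • y) '' R = R := by
      apply Set.eq_of_subset_of_ncard_le himg _ (Set.toFinite R)
      rw [Set.ncard_image_of_injective _ (MulAction.injective g)]
    rw [← heq] at hx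
    obtain ⟨y, hy, hxy⟩ := hx
    have : g⁻¹ • x = y := by rw [← hxy]; simp
    rwa [this]

/-- A permutation group on `Ω` is a relation group if it is the invariance group
of some unordered relation on `Ω`. -/
def IsRelationGroup {Ω : Type*} [Fintype Ω] [DecidableEq Ω]
    (G : Subgroup (Equiv.Perm Ω)) : Prop :=
  ∃ R : Set (Finset Ω), G = invGroup R

/-- `w` is a regular set for `G`: only the identity of `G` stabilizes `w` setwise. -/
def IsRegularSet {Ω : Type*} [DecidableEq Ω] (G : Subgroup (Equiv.Perm Ω))
    (w : Finset Ω) : Prop :=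
  ∀ g ∈ G, g • w = w → g = 1

/-- The arity of a relation: the set of cardinalities of its members. -/
def arity {Ω : Type*} (R : Set (Finset Ω)) : Set ℕ := {n | ∃ x ∈ R, x.card = n}

/-- `G` is orbit closed: every permutation mapping each finite subset into its
`G`-orbit already lies in `G`. -/
def IsOrbitClosed {Ω : Type*} [DecidableEq Ω] (G : Subgroup (Equiv.Perm Ω)) : Prop :=
  ∀ g : Equiv.Perm Ω, (∀ x : Finset Ω, ∃ h ∈ G, g • x = h • x) → g ∈ G

/-- `G` is set-transitive: transitive on `k`-element subsets for every `k`. -/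
def IsSetTransitive {Ω : Type*} [DecidableEq Ω] (G : Subgroup (Equiv.Perm Ω)) : Prop :=
  ∀ x y : Finset Ω, x.card = y.card → ∃ g ∈ G, g • x = y

/-- A permutation group is primitive if it is transitive and every block of the
action is trivial (a subsingleton or the whole set). -/
def IsPrimitivePermGroup {Ω : Type*} (G : Subgroup (Equiv.Perm Ω)) : Prop :=
  MulAction.IsPretransitive ↥G Ω ∧
    ∀ B : Set Ω, MulAction.IsBlock ↥G B → B.Subsingleton ∨ B = Set.univ

/-- The imprimitive wreath product `K ≀ L` as a subgroup of `Sym (Δ × Γ)`: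
all permutations `g` of `Δ × Γ` of the form `g (δ, i) = (k_i δ, σ i)`
with `σ ∈ L` and each `k_i ∈ K`. -/
def wreathProduct {Δ Γ : Type*} (K : Subgroup (Equiv.Perm Δ)) (L : Subgroup (Equiv.Perm Γ)) :
    Subgroup (Equiv.Perm (Δ × Γ)) where
  carrier := {g | ∃ σ ∈ L, ∃ k : Γ → Equiv.Perm Δ, (∀ i, k i ∈ K) ∧
      ∀ p : Δ × Γ, g p = (k p.2 p.1, σ p.2)}
  one_mem' := ⟨1, L.one_mem, fun _ => 1, fun _ => K.one_mem, fun _ => rfl⟩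
  mul_mem' := by
    rintro a b ⟨σa, hσa, ka, hka, ha⟩ ⟨σb, hσb, kb, hkb, hb⟩
    refine ⟨σa * σb, L.mul_mem hσa hσb, fun i => ka (σb i) * kb i,
      fun i => K.mul_mem (hka _) (hkb _), fun p => ?_⟩
    have : (a * b) p = a (b p) := rfl
    rw [this, hb p, ha]
    rfl
  inv_mem' := by
    rintro g ⟨σ, hσ, k, hk, hg⟩
    refine ⟨σ⁻¹, L.inv_mem hσ, fun i => (k (σ⁻¹ i))⁻¹, fun i => K.inv_mem (hk _), fun p => ?_⟩
    apply g.injective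
    rw [show g (g⁻¹ p) = p from g.apply_symm_apply p, hg]
    simp

lemma aux_half {Δ : Type*} [Fintype Δ] [DecidableEq Δ] (k : Equiv.Perm Δ) (w : Finset Δ)
    (h : ∀ δ, δ ∈ w ↔ k δ ∉ w) : 2 * w.card = Fintype.card Δ := by
  have h1 : w.image k ⊆ wᶜ := by
    intro x hx
    simp only [Finset.mem_image] at hx
    obtain ⟨a, ha, rfl⟩ := hx
    simpa using (h a).1 ha
  have h2 : wᶜ.image k ⊆ w := by
    intro x hx
    simp only [Finset.mem_image, Finset.mem_compl] at hx
    obtain ⟨a, ha, rfl⟩ := hx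
    by_contra hc
    exact ha ((h a).2 hc)
  have c1 := Finset.card_le_card h1
  have c2 := Finset.card_le_card h2
  rw [Finset.card_image_of_injective _ k.injective] at c1 c2
  have := Finset.card_add_card_compl w
  omega

/-- If the transitive group `K` on `Δ` has a regular set of size `r_Δ` with
`2 r_Δ ≠ |Δ|` and the transitive group `L` on `Γ` has a regular set of size
`r_Σ`, then `K ≀ L` has a regular set of size `r_Σ·r_Δ + (s - r_Σ)(d - r_Δ)`
on `Δ × Γ`. -/
theorem wreathProduct_regular_set {Δ Γ : Type*}
    [Fintype Δ] [DecidableEq Δ] [Fintype Γ] [DecidableEq Γ]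
    (K : Subgroup (Equiv.Perm Δ)) (L : Subgroup (Equiv.Perm Γ))
    (hKtrans : MulAction.IsPretransitive ↥K Δ)
    (hLtrans : MulAction.IsPretransitive ↥L Γ)
    (wΔ : Finset Δ) (hwΔ : IsRegularSet K wΔ) (hhalf : 2 * wΔ.card ≠ Fintype.card Δ)
    (wΓ : Finset Γ) (hwΓ : IsRegularSet L wΓ) :
    ∃ w : Finset (Δ × Γ), IsRegularSet (wreathProduct K L) w ∧
      w.card = wΓ.card * wΔ.card +
        (Fintype.card Γ - wΓ.card) * (Fintype.card Δ - wΔ.card) := by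
  classical
  set w : Finset (Δ × Γ) := wΔ ×ˢ wΓ ∪ wΔᶜ ×ˢ wΓᶜ with hw
  have hmem : ∀ p : Δ × Γ, p ∈ w ↔ (p.1 ∈ wΔ ↔ p.2 ∈ wΓ) := by
    intro p
    simp only [hw, Finset.mem_union, Finset.mem_product, Finset.mem_compl]
    tauto
  refine ⟨w, ?_, ?_⟩
  · intro g hg hgw
    obtain ⟨σ, hσ, k, hk, hgf⟩ := hg
    have key : ∀ p : Δ × Γ, g p ∈ w ↔ p ∈ w := by
      intro p
      conv_lhs => rw [← hgw]
      exact Finset.smul_mem_smul_finset_iff g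
    have hchain : ∀ (δ : Δ) (i : Γ),
        ((k i δ ∈ wΔ) ↔ (σ i ∈ wΓ)) ↔ ((δ ∈ wΔ) ↔ (i ∈ wΓ)) := by
      intro δ i
      have h1 := key (δ, i)
      rw [hgf (δ, i)] at h1
      rw [hmem, hmem] at h1
      exact h1
    have claim1 : ∀ i, σ i ∈ wΓ ↔ i ∈ wΓ := by
      intro i
      by_contra hcon
      refine hhalf (aux_half (k i) wΔ ?_)
      intro δ
      have := hchain δ i
      tauto
    have hσ1 : σ = 1 := by
      apply hwΓ σ hσ
      ext j
      simp only [Finset.mem_smul_finset]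
      constructor
      · rintro ⟨y, hy, rfl⟩
        exact (claim1 y).2 hy
      · intro hj
        refine ⟨σ⁻¹ j, (claim1 (σ⁻¹ j)).1 ?_, by simp⟩
        simpa using hj
    have hki : ∀ i, k i = 1 := by
      intro i
      apply hwΔ _ (hk i)
      have hrel : ∀ δ, k i δ ∈ wΔ ↔ δ ∈ wΔ := by
        intro δ
        have := hchain δ i
        rw [hσ1] at this
        simp only [Equiv.Perm.one_apply] at this
        tauto
      ext δ
      simp only [Finset.mem_smul_finset]
      constructor
      · rintro ⟨y, hy, rfl⟩
        exact (hrel y).2 hy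
      · intro hδ
        refine ⟨(k i)⁻¹ δ, (hrel ((k i)⁻¹ δ)).1 ?_, by simp⟩
        simpa using hδ
    exact Equiv.ext fun p => by rw [hgf p, hσ1, hki]; simp
  · have hdisj : Disjoint (wΔ ×ˢ wΓ) (wΔᶜ ×ˢ wΓᶜ) := by
      rw [Finset.disjoint_left]
      rintro ⟨a, b⟩ h1 h2
      simp only [Finset.mem_product, Finset.mem_compl] at h1 h2
      tauto
    rw [hw, Finset.card_union_of_disjoint hdisj, Finset.card_product, Finset.card_product,
      Finset.card_compl, Finset.card_compl]
    ring
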